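/- Let X ∈ ℂ^{n×t} (n ≤ t) be in the Zariski closure of the set { U Diag(x) Vᵀ : U ∈ O_ℂ(n), V ∈ O_ℂ(t), x ∈ S_ℂ } where S_ℂ ⊆ ℂⁿ is a Zariski-closed set invariant under signed permutations. If X_k = U_k Diag(x^k) V_kᵀ is a sequence with U_k ∈ O_ℂ(n), V_k ∈ O_ℂ(t), x^k ∈ S_ℂ converging to X in the Euclidean topology, then any vector x of square roots of the eigenvalues of X Xᵀ lies in S_ℂ. -/

import Mathlib

open Matrix Polynomial Filter Topology

/-- `Diag x ∈ ℂ^{n×t}`. -/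
def diagRectC (n t : ℕ) (x : Fin n → ℂ) : Matrix (Fin n) (Fin t) ℂ :=
  fun i j => if (j : ℕ) = (i : ℕ) then x i else 0

lemma exists_perm_of_map_eq {α : Type*} : ∀ {m : ℕ} (f g : Fin m → α),
    Multiset.map f Finset.univ.val = Multiset.map g Finset.univ.val →
    ∃ σ : Equiv.Perm (Fin m), ∀ i, f (σ i) = g i := by
  intro m
  induction m with
  | zero => intro f g _; exact ⟨1, fun i => i.elim0⟩
  | succ m ih =>
    intro f g h
    have h0 : g 0 ∈ Multiset.map f Finset.univ.val := by
      rw [h]; exact Multiset.mem_map_of_mem _ (Finset.mem_univ_val _)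
    obtain ⟨j, -, hj⟩ := Multiset.mem_map.mp h0
    set f₁ : Fin (m + 1) → α := f ∘ (Equiv.swap 0 j) with hf₁
    have hmap : Multiset.map f₁ Finset.univ.val = Multiset.map g Finset.univ.val := by
      rw [← h, hf₁]
      have heq := Finset.map_univ_equiv (Equiv.swap 0 j)
      have this : Multiset.map (⇑(Equiv.swap 0 j)) Finset.univ.val = Finset.univ.val := by
        conv_rhs => rw [← heq, Finset.map_val]
        rfl
      calc Multiset.map f₁ Finset.univ.val
          = Multiset.map f (Multiset.map (⇑(Equiv.swap 0 j)) Finset.univ.val) := by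
            rw [Multiset.map_map]
        _ = Multiset.map f Finset.univ.val := by rw [this]
    have hval : (Finset.univ.val : Multiset (Fin (m+1))) =
        0 ::ₘ Multiset.map Fin.succ Finset.univ.val := by
      rw [Fin.univ_succ, Finset.cons_val, Finset.map_val]
      rfl
    rw [hval, Multiset.map_cons, Multiset.map_cons, Multiset.map_map, Multiset.map_map] at hmap
    have hf10 : f₁ 0 = g 0 := by simp [hf₁, hj]
    rw [hf10] at hmap
    have htail := (Multiset.cons_inj_right _).mp hmap
    obtain ⟨τ, hτ⟩ := ih (f₁ ∘ Fin.succ) (g ∘ Fin.succ) htail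
    refine ⟨(⟨Fin.cases 0 (fun i => (τ i).succ), Fin.cases 0 (fun i => (τ.symm i).succ),
      ?_, ?_⟩ : Equiv.Perm (Fin (m+1))).trans (Equiv.swap 0 j), ?_⟩
    · intro i
      induction i using Fin.cases with
      | zero => simp
      | succ k => simp
    · intro i
      induction i using Fin.cases with
      | zero => simp
      | succ k => simp
    · intro i
      induction i using Fin.cases with
      | zero => simpa [hf₁] using hf10
      | succ k => simpa [hf₁] using hτ k

lemma diagRectC_mul_transpose {n t : ℕ} (hnt : n ≤ t) (x : Fin n → ℂ) :
    diagRectC n t x * (diagRectC n t x)ᵀ = diagonal (fun i => x i ^ 2) := by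
  ext i i'
  rw [mul_apply, diagonal_apply]
  rw [Finset.sum_eq_single (⟨(i' : ℕ), lt_of_lt_of_le i'.2 hnt⟩ : Fin t)]
  · simp only [diagRectC, transpose_apply]
    by_cases h : i = i'
    · subst h
      simp [sq]
    · have : ¬ ((i' : ℕ) = (i : ℕ)) := fun hc => h (Fin.ext hc.symm)
      simp [this, h]
  · intro j _ hj
    have : ¬ ((j : ℕ) = (i' : ℕ)) := fun hc => hj (Fin.ext hc)
    simp [diagRectC, transpose_apply, this]
  · intro hmem
    exact absurd (Finset.mem_univ _) hmem

lemma eval_charpoly'' {n : ℕ} (M : Matrix (Fin n) (Fin n) ℂ) (z : ℂ) :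
    (M.charpoly).eval z = det (z • (1 : Matrix (Fin n) (Fin n) ℂ) - M) := by
  rw [Matrix.charpoly, ← Polynomial.coe_evalRingHom, RingHom.map_det]
  congr 1
  ext i j
  by_cases h : i = j
  · subst h
    simp [charmatrix_apply_eq, Matrix.one_apply, Matrix.smul_apply]
  · simp [charmatrix_apply_ne _ _ _ h, Matrix.one_apply, h, Matrix.smul_apply]

lemma det_smul_one_sub_conj {n : ℕ} (U : Matrix (Fin n) (Fin n) ℂ)
    (hU : U * Uᵀ = 1) (d : Fin n → ℂ) (z : ℂ) :
    det (z • (1 : Matrix (Fin n) (Fin n) ℂ) - U * diagonal d * Uᵀ) = ∏ i, (z - d i) := by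
  have key : z • (1 : Matrix (Fin n) (Fin n) ℂ) - U * diagonal d * Uᵀ
      = U * (z • (1 : Matrix (Fin n) (Fin n) ℂ) - diagonal d) * Uᵀ := by
    rw [Matrix.mul_sub, Matrix.sub_mul]
    congr 1
    rw [Matrix.mul_smul, Matrix.mul_one, Matrix.smul_mul, hU]
  rw [key, det_mul, det_mul]
  have hdet : det U * det Uᵀ = 1 := by rw [← det_mul, hU, det_one]
  have hre : det U * det (z • (1 : Matrix (Fin n) (Fin n) ℂ) - diagonal d) * det Uᵀ
      = (det U * det Uᵀ) * det (z • (1 : Matrix (Fin n) (Fin n) ℂ) - diagonal d) := by ring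
  rw [hre, hdet, one_mul]
  have hdg : z • (1 : Matrix (Fin n) (Fin n) ℂ) - diagonal d = diagonal (fun i => z - d i) := by
    ext a b
    by_cases h : a = b
    · subst h; simp [Matrix.one_apply, Matrix.smul_apply, diagonal_apply]
    · simp [Matrix.one_apply, Matrix.smul_apply, diagonal_apply, h]
  rw [hdg, det_diagonal]

lemma eig_bound {n : ℕ} (A : Matrix (Fin n) (Fin n) ℂ) (z : ℂ)
    (h : det (z • (1 : Matrix (Fin n) (Fin n) ℂ) - A) = 0) :
    ∃ k, ‖z‖ ≤ ∑ j, ‖A k j‖ := by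
  obtain ⟨v, hv0, hv⟩ := (Matrix.exists_mulVec_eq_zero_iff).mpr h
  have hev : Module.End.HasEigenvalue (Matrix.toLin' A) z := by
    apply Module.End.hasEigenvalue_of_hasEigenvector (x := v)
    refine ⟨Module.End.mem_eigenspace_iff.mpr ?_, hv0⟩
    rw [Matrix.toLin'_apply]
    have h2 : (z • (1 : Matrix (Fin n) (Fin n) ℂ)) *ᵥ v - A *ᵥ v = 0 := by
      rw [← Matrix.sub_mulVec, hv]
    have h3 : (z • (1 : Matrix (Fin n) (Fin n) ℂ)) *ᵥ v = z • v := by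
      rw [Matrix.smul_mulVec, Matrix.one_mulVec]
    rw [h3] at h2
    linear_combination (norm := module) -h2
  obtain ⟨k, hk⟩ := eigenvalue_mem_ball hev
  refine ⟨k, ?_⟩
  have hdist : ‖z - A k k‖ ≤ ∑ j ∈ Finset.univ.erase k, ‖A k j‖ := by
    rw [← dist_eq_norm]; exact Metric.mem_closedBall.mp hk
  calc ‖z‖ = ‖A k k + (z - A k k)‖ := by ring_nf
    _ ≤ ‖A k k‖ + ‖z - A k k‖ := norm_add_le _ _
    _ ≤ ‖A k k‖ + ∑ j ∈ Finset.univ.erase k, ‖A k j‖ := by linarith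
    _ = ∑ j, ‖A k j‖ := Finset.add_sum_erase _ (fun j => ‖A k j‖) (Finset.mem_univ k)

theorem stmt15 {n t : ℕ} (hnt : n ≤ t) (S : Set (Fin n → ℂ))
    (hSclosed : IsClosed S)
    (hSinv : ∀ (σ : Equiv.Perm (Fin n)) (ε : Fin n → ℂ), (∀ i, ε i = 1 ∨ ε i = -1) →
      ∀ x ∈ S, (fun i => ε i * x (σ i)) ∈ S)
    (X : Matrix (Fin n) (Fin t) ℂ)
    (U : ℕ → Matrix (Fin n) (Fin n) ℂ) (V : ℕ → Matrix (Fin t) (Fin t) ℂ)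
    (xseq : ℕ → Fin n → ℂ)
    (hU : ∀ k, U k * (U k)ᵀ = 1) (hV : ∀ k, V k * (V k)ᵀ = 1)
    (hx : ∀ k, xseq k ∈ S)
    (hconv : Tendsto (fun k => U k * diagRectC n t (xseq k) * (V k)ᵀ) atTop (nhds X))
    (x : Fin n → ℂ)
    (hroots : (X * Xᵀ).charpoly = ∏ i : Fin n, (Polynomial.X - C (x i ^ 2))) :
    x ∈ S := by
  classical
  set M : ℕ → Matrix (Fin n) (Fin t) ℂ := fun k => U k * diagRectC n t (xseq k) * (V k)ᵀ with hM
  set P : ℕ → Matrix (Fin n) (Fin n) ℂ := fun k => M k * (M k)ᵀ with hP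
  have hPk : ∀ k, P k = U k * diagonal (fun i => xseq k i ^ 2) * (U k)ᵀ := by
    intro k
    have hVtV : (V k)ᵀ * V k = 1 := mul_eq_one_comm.mp (hV k)
    have e1 : P k = U k * (diagRectC n t (xseq k) * (((V k)ᵀ * V k) *
        ((diagRectC n t (xseq k))ᵀ * (U k)ᵀ))) := by
      simp only [hP, hM, Matrix.transpose_mul, Matrix.transpose_transpose, Matrix.mul_assoc]
    rw [e1, hVtV, Matrix.one_mul, ← Matrix.mul_assoc (diagRectC n t (xseq k)),
      diagRectC_mul_transpose hnt, ← Matrix.mul_assoc]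
  have hPconv : Tendsto P atTop (nhds (X * Xᵀ)) := by
    have hc : Continuous (fun A : Matrix (Fin n) (Fin t) ℂ => A * Aᵀ) :=
      continuous_id.matrix_mul continuous_id.matrix_transpose
    exact (hc.tendsto X).comp hconv
  have hdet : ∀ (k : ℕ) (z : ℂ),
      det (z • (1 : Matrix (Fin n) (Fin n) ℂ) - P k) = ∏ i, (z - xseq k i ^ 2) := by
    intro k z
    rw [hPk k]
    exact det_smul_one_sub_conj (U k) (hU k) _ z
  -- entrywise bounds on P
  have hentry : ∀ a b : Fin n, ∃ c : ℝ, ∀ k, ‖P k a b‖ ≤ c := by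
    intro a b
    have hten : Tendsto (fun k => ‖P k a b‖) atTop (nhds ‖(X * Xᵀ) a b‖) := by
      have hcont : Continuous (fun A : Matrix (Fin n) (Fin n) ℂ => ‖A a b‖) :=
        ((continuous_apply b).comp (continuous_apply a)).norm
      exact (hcont.tendsto _).comp hPconv
    obtain ⟨c, hc⟩ := hten.bddAbove_range
    exact ⟨c, fun k => hc (Set.mem_range_self k)⟩
  choose c hc using hentry
  set C1 : ℝ := ∑ a : Fin n, ∑ b : Fin n, c a b with hC1
  have hcnonneg : ∀ a b, 0 ≤ c a b := fun a b => le_trans (norm_nonneg _) (hc a b 0)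
  have hrow : ∀ (k : ℕ) (a : Fin n), ∑ j, ‖P k a j‖ ≤ C1 := by
    intro k a
    calc ∑ j, ‖P k a j‖ ≤ ∑ j, c a j := Finset.sum_le_sum fun j _ => hc a j k
      _ ≤ C1 := Finset.single_le_sum (f := fun a => ∑ b, c a b)
          (fun a _ => Finset.sum_nonneg fun b _ => hcnonneg a b) (Finset.mem_univ a)
  set R : ℝ := Real.sqrt C1 with hR
  have hxbound : ∀ k i, ‖xseq k i‖ ≤ R := by
    intro k i
    have hz : det ((xseq k i ^ 2) • (1 : Matrix (Fin n) (Fin n) ℂ) - P k) = 0 := by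
      rw [hdet k]
      exact Finset.prod_eq_zero (Finset.mem_univ i) (by ring)
    obtain ⟨a, ha⟩ := eig_bound (P k) _ hz
    have h1 : ‖xseq k i‖ ^ 2 ≤ C1 := by
      have : ‖xseq k i ^ 2‖ = ‖xseq k i‖ ^ 2 := norm_pow _ _
      rw [← this]
      exact le_trans ha (hrow k a)
    rw [hR]
    exact Real.le_sqrt_of_sq_le h1
  -- extract convergent subsequence
  have hRnn : (0:ℝ) ≤ R := Real.sqrt_nonneg _
  have hmem : ∀ k, xseq k ∈ Metric.closedBall (0 : Fin n → ℂ) R := by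
    intro k
    rw [Metric.mem_closedBall, dist_zero_right]
    exact (pi_norm_le_iff_of_nonneg hRnn).mpr (hxbound k)
  obtain ⟨y, -, φ, hφ, hyconv⟩ :=
    tendsto_subseq_of_bounded Metric.isBounded_closedBall hmem
  have hyS : y ∈ S :=
    hSclosed.mem_of_tendsto hyconv (Eventually.of_forall fun j => hx (φ j))
  -- pointwise identity of products
  have hkey : ∀ z : ℂ, ∏ i, (z - y i ^ 2) = ∏ i, (z - x i ^ 2) := by
    intro z
    have h1 : Tendsto (fun j => det (z • (1 : Matrix (Fin n) (Fin n) ℂ) - P (φ j))) atTop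
        (nhds (det (z • (1 : Matrix (Fin n) (Fin n) ℂ) - X * Xᵀ))) := by
      have hcont : Continuous (fun A : Matrix (Fin n) (Fin n) ℂ =>
          det (z • (1 : Matrix (Fin n) (Fin n) ℂ) - A)) :=
        (continuous_const.sub continuous_id).matrix_det
      exact (hcont.tendsto _).comp (hPconv.comp hφ.tendsto_atTop)
    have h2 : Tendsto (fun j => ∏ i, (z - xseq (φ j) i ^ 2)) atTop
        (nhds (∏ i, (z - y i ^ 2))) := by
      have hg : Continuous (fun w : Fin n → ℂ => ∏ i, (z - w i ^ 2)) :=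
        continuous_finset_prod _ fun i _ => continuous_const.sub ((continuous_apply i).pow 2)
      exact (hg.tendsto y).comp hyconv
    have h1' : Tendsto (fun j => ∏ i, (z - xseq (φ j) i ^ 2)) atTop
        (nhds (det (z • (1 : Matrix (Fin n) (Fin n) ℂ) - X * Xᵀ))) := by
      refine h1.congr fun j => ?_
      exact hdet (φ j) z
    have huniq := tendsto_nhds_unique h1' h2
    rw [← huniq, ← eval_charpoly'', hroots]
    rw [eval_prod]
    refine Finset.prod_congr rfl fun i _ => ?_
    simp
  -- polynomial equality
  have hpoly : (∏ i, (Polynomial.X - C (y i ^ 2)) : Polynomial ℂ)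
      = ∏ i, (Polynomial.X - C (x i ^ 2)) := by
    apply Polynomial.funext
    intro z
    rw [eval_prod, eval_prod]
    have hz := hkey z
    simpa using hz
  -- multiset of roots
  have hms : Multiset.map (fun i => y i ^ 2) Finset.univ.val
      = Multiset.map (fun i => x i ^ 2) Finset.univ.val := by
    have e1 : ((Multiset.map (fun i => y i ^ 2) Finset.univ.val).map
        (fun a => Polynomial.X - C a)).prod = ∏ i, (Polynomial.X - C (y i ^ 2)) := by
      rw [Multiset.map_map]
      rfl
    have e2 : ((Multiset.map (fun i => x i ^ 2) Finset.univ.val).map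
        (fun a => Polynomial.X - C a)).prod = ∏ i, (Polynomial.X - C (x i ^ 2)) := by
      rw [Multiset.map_map]
      rfl
    calc Multiset.map (fun i => y i ^ 2) Finset.univ.val
        = (∏ i, (Polynomial.X - C (y i ^ 2)) : Polynomial ℂ).roots := by
          rw [← e1, Polynomial.roots_multiset_prod_X_sub_C]
      _ = (∏ i, (Polynomial.X - C (x i ^ 2)) : Polynomial ℂ).roots := by rw [hpoly]
      _ = Multiset.map (fun i => x i ^ 2) Finset.univ.val := by
          rw [← e2, Polynomial.roots_multiset_prod_X_sub_C]
  obtain ⟨σ, hσ⟩ := exists_perm_of_map_eq _ _ hms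
  -- signs
  set ε : Fin n → ℂ := fun i => if y (σ i) = x i then 1 else -1 with hε
  have hεpm : ∀ i, ε i = 1 ∨ ε i = -1 := by
    intro i
    by_cases h : y (σ i) = x i
    · left; simp [hε, h]
    · right; simp [hε, h]
  have hxy : x = fun i => ε i * y (σ i) := by
    funext i
    by_cases h : y (σ i) = x i
    · simp [hε, h]
    · have hsq : y (σ i) ^ 2 = x i ^ 2 := hσ i
      have h2 : (y (σ i) - x i) * (y (σ i) + x i) = 0 := by ring_nf; linear_combination hsq
      rcases mul_eq_zero.mp h2 with h3 | h3
      · exact absurd (by linear_combination h3) h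
      · have h4 : y (σ i) = -x i := by linear_combination h3
        show x i = ε i * y (σ i)
        simp only [hε]
        rw [if_neg h, h4]
        ring
  rw [hxy]
  exact hSinv σ ε hεpm y hyS
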